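/- Implicit differentiation of the equilibrium map: let f : ℝ^m → ℝ^m be continuously differentiable, λ > 0, and define F(x, C) = x − f(−(1/λ)(b + Cx)) for C ∈ ℝ^{m×m}. If x satisfies F(x, C) = 0 and the matrix I_m + (1/λ) ∂f(u) C is nonsingular, where u = −(1/λ)(b + Cx), then locally x is a continuously differentiable function of C, and for any continuously differentiable ψ : ℝ^m → ℝ, the gradient of ψ(x(C)) with respect to C is ∇_C ψ = −(1/λ) ∂f(u)ᵀ (I_m + (1/λ)∂f(u)C)^{−ᵀ} ∇_x ψ(x) xᵀ. -/

import Mathlib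

open Matrix


noncomputable def mvB (m : ℕ) :
    (Fin m → Fin m → ℝ) →L[ℝ] (Fin m → ℝ) →L[ℝ] (Fin m → ℝ) :=
  LinearMap.toContinuousLinearMap
    { toFun := fun C => LinearMap.toContinuousLinearMap (Matrix.mulVecLin (Matrix.of C))
      map_add' := fun C C' => by ext v i; simp [Matrix.mulVec, dotProduct, add_mul, Finset.sum_add_distrib]
      map_smul' := fun r C => by ext v i; simp [Matrix.mulVec, dotProduct, Finset.mul_sum, mul_assoc]
    }

lemma mvB_apply {m : ℕ} (C : Fin m → Fin m → ℝ) (x : Fin m → ℝ) :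
    mvB m C x = (Matrix.of C).mulVec x := rfl


/-- implicit differentiation of the equilibrium map.  If
`x₀ = f(-(1/λ)(b + C₀ x₀))` and `I + (1/λ) ∂f(u₀) C₀` is nonsingular, then
locally the equilibrium `x` is a `C¹` function `g` of `C`, and for any `C¹`
performance function `ψ`, the matrix of partial derivatives
`∂ψ(g C)/∂C_{pq}` at `C₀` equals
`-(1/λ) ∂f(u₀)ᵀ (I + (1/λ)∂f(u₀)C₀)⁻ᵀ ∇ψ(x₀) x₀ᵀ`. -/
theorem stmt11 {m : ℕ} (f : (Fin m → ℝ) → (Fin m → ℝ)) (hf : ContDiff ℝ 1 f)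
    (b : Fin m → ℝ) (lam : ℝ) (hlam : 0 < lam)
    (C₀ : Fin m → Fin m → ℝ) (x₀ : Fin m → ℝ)
    (u₀ : Fin m → ℝ) (hu₀ : u₀ = -(lam⁻¹) • (b + (Matrix.of C₀).mulVec x₀))
    (hfix : x₀ = f u₀)
    (J : Matrix (Fin m) (Fin m) ℝ)
    (hJ : J = LinearMap.toMatrix' (fderiv ℝ f u₀ : (Fin m → ℝ) →ₗ[ℝ] (Fin m → ℝ)))
    (hinv : IsUnit ((1 : Matrix (Fin m) (Fin m) ℝ) + lam⁻¹ • (J * Matrix.of C₀))) :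
    ∃ U ∈ nhds C₀, ∃ g : (Fin m → Fin m → ℝ) → (Fin m → ℝ),
      ContDiffOn ℝ 1 g U ∧ g C₀ = x₀ ∧
      (∀ C ∈ U, g C = f (-(lam⁻¹) • (b + (Matrix.of C).mulVec (g C)))) ∧
      ∀ ψ : (Fin m → ℝ) → ℝ, ContDiff ℝ 1 ψ →
        ∀ p q : Fin m,
          fderiv ℝ (fun C => ψ (g C)) C₀ (Pi.single p (Pi.single q 1)) =
            (-(lam⁻¹)) •
              Matrix.vecMulVec
                ((Jᵀ * (((1 : Matrix (Fin m) (Fin m) ℝ) + lam⁻¹ • (J * Matrix.of C₀))⁻¹)ᵀ).mulVec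
                  (fun a => fderiv ℝ ψ x₀ (Pi.single a 1)))
                x₀ p q := by
  classical
  set M : Matrix (Fin m) (Fin m) ℝ := 1 + lam⁻¹ • (J * Matrix.of C₀) with hM
  set D : (Fin m → ℝ) →L[ℝ] (Fin m → ℝ) := fderiv ℝ f u₀ with hDdef
  have hD : ∀ w, J.mulVec w = D w := by
    intro w
    rw [hJ]
    have h1 : Matrix.toLin' (LinearMap.toMatrix' (D : (Fin m → ℝ) →ₗ[ℝ] (Fin m → ℝ)))
        = (D : (Fin m → ℝ) →ₗ[ℝ] (Fin m → ℝ)) := Matrix.toLin'_toMatrix' _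
    calc (LinearMap.toMatrix' (D : (Fin m → ℝ) →ₗ[ℝ] (Fin m → ℝ))).mulVec w
        = Matrix.toLin' (LinearMap.toMatrix' (D : (Fin m → ℝ) →ₗ[ℝ] (Fin m → ℝ))) w := by
          rw [Matrix.toLin'_apply]
      _ = D w := by rw [h1]; rfl
  have hdet : IsUnit M.det := (Matrix.isUnit_iff_isUnit_det M).mp hinv
  have hMl : M⁻¹ * M = 1 := Matrix.nonsing_inv_mul M hdet
  have hMr : M * M⁻¹ = 1 := Matrix.mul_nonsing_inv M hdet
  -- bilinear map
  have hB : IsBoundedBilinearMap ℝ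
      (fun p : (Fin m → Fin m → ℝ) × (Fin m → ℝ) => mvB m p.1 p.2) :=
    (mvB m).isBoundedBilinearMap
  set u : (Fin m → Fin m → ℝ) × (Fin m → ℝ) → (Fin m → ℝ) :=
    fun p => -(lam⁻¹) • (b + mvB m p.1 p.2) with hudef
  have hucd : ContDiff ℝ 1 u := (contDiff_const.add hB.contDiff).const_smul _
  set H : (Fin m → Fin m → ℝ) × (Fin m → ℝ) → (Fin m → Fin m → ℝ) × (Fin m → ℝ) :=
    fun p => (p.1, p.2 - f (u p)) with hHdef
  have hHcd : ContDiff ℝ 1 H := contDiff_fst.prodMk (contDiff_snd.sub (hf.comp hucd))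
  have hu0 : u (C₀, x₀) = u₀ := by rw [hu₀]; rfl
  -- derivative of u
  set Du : (Fin m → Fin m → ℝ) × (Fin m → ℝ) →L[ℝ] (Fin m → ℝ) :=
    (-(lam⁻¹) : ℝ) • (hB.deriv (C₀, x₀)) with hDudef
  have hDu : HasFDerivAt u Du (C₀, x₀) :=
    ((hB.hasFDerivAt (C₀, x₀)).const_add b).const_smul (-(lam⁻¹))
  have hfD : HasFDerivAt f D u₀ := (hf.differentiable one_ne_zero u₀).hasFDerivAt
  have hfu : HasFDerivAt (fun p => f (u p)) (D.comp Du) (C₀, x₀) :=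
    (hu0 ▸ hfD).comp _ hDu
  set T : ((Fin m → Fin m → ℝ) × (Fin m → ℝ)) →L[ℝ] ((Fin m → Fin m → ℝ) × (Fin m → ℝ)) :=
    (ContinuousLinearMap.fst ℝ _ _).prod (ContinuousLinearMap.snd ℝ _ _ - D.comp Du) with hTdef
  have hT : HasFDerivAt H T (C₀, x₀) := (hasFDerivAt_fst).prodMk ((hasFDerivAt_snd).sub hfu)
  have hTap : ∀ c v, T (c, v) =
      (c, M.mulVec v + lam⁻¹ • J.mulVec ((Matrix.of c).mulVec x₀)) := by
    intro c v
    have hderiv : Du (c, v) = -(lam⁻¹) • ((Matrix.of C₀).mulVec v + (Matrix.of c).mulVec x₀) := by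
      rw [hDudef]
      have hda := hB.deriv_apply (C₀, x₀) (c, v)
      rw [ContinuousLinearMap.smul_apply, hda]
      rfl
    have h0 : T (c, v) = (c, v - D (Du (c, v))) := rfl
    rw [h0, hderiv, _root_.map_smul, map_add]
    have h1 : M.mulVec v = v + lam⁻¹ • J.mulVec ((Matrix.of C₀).mulVec v) := by
      rw [hM, Matrix.add_mulVec, Matrix.one_mulVec, Matrix.smul_mulVec,
        ← Matrix.mulVec_mulVec]
    rw [h1, hD, hD]
    congr 1
    module
  -- inverse linear map
  set K : (Fin m → Fin m → ℝ) →L[ℝ] (Fin m → ℝ) := (mvB m).flip x₀ with hKdef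
  set JL : (Fin m → ℝ) →L[ℝ] (Fin m → ℝ) :=
    LinearMap.toContinuousLinearMap J.mulVecLin with hJLdef
  set NL : (Fin m → ℝ) →L[ℝ] (Fin m → ℝ) :=
    LinearMap.toContinuousLinearMap (M⁻¹).mulVecLin with hNLdef
  set S : ((Fin m → Fin m → ℝ) × (Fin m → ℝ)) →L[ℝ] ((Fin m → Fin m → ℝ) × (Fin m → ℝ)) :=
    (ContinuousLinearMap.fst ℝ _ _).prod
      (NL.comp (ContinuousLinearMap.snd ℝ _ _
        - lam⁻¹ • (JL.comp (K.comp (ContinuousLinearMap.fst ℝ _ _))))) with hSdef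
  have hSap : ∀ c w, S (c, w) =
      (c, (M⁻¹).mulVec (w - lam⁻¹ • J.mulVec ((Matrix.of c).mulVec x₀))) := by
    intro c w; rfl
  have hMv : ∀ v, (M⁻¹).mulVec (M.mulVec v) = v := by
    intro v; rw [Matrix.mulVec_mulVec, hMl, Matrix.one_mulVec]
  have hMv' : ∀ v, M.mulVec ((M⁻¹).mulVec v) = v := by
    intro v; rw [Matrix.mulVec_mulVec, hMr, Matrix.one_mulVec]
  have hleft : Function.LeftInverse S T := by
    intro p
    rcases p with ⟨c, v⟩
    rw [hTap, hSap]
    simp only [add_sub_cancel_right, hMv]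
  have hright : Function.RightInverse S T := by
    intro p
    rcases p with ⟨c, w⟩
    rw [hSap, hTap]
    simp only [hMv', sub_add_cancel]
  set Teq := ContinuousLinearEquiv.equivOfInverse T S hleft hright with hTeqdef
  have hT' : HasFDerivAt H (Teq :
      ((Fin m → Fin m → ℝ) × (Fin m → ℝ)) →L[ℝ] ((Fin m → Fin m → ℝ) × (Fin m → ℝ))) (C₀, x₀) := hT
  have hstrict := hHcd.contDiffAt.hasStrictFDerivAt' hT' one_ne_zero
  set inv := hstrict.localInverse H Teq (C₀, x₀) with hinvdef
  have hH0 : H (C₀, x₀) = (C₀, 0) := by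
    simp only [hHdef, hu0, ← hfix, sub_self]
  have hinva : inv (C₀, 0) = (C₀, x₀) := by
    rw [← hH0]; exact hstrict.localInverse_apply_image
  have hinvcd : ContDiffAt ℝ 1 inv (C₀, 0) := by
    have := hHcd.contDiffAt.to_localInverse hT' one_ne_zero
    rwa [hH0] at this
  have hev : ∀ᶠ y in nhds ((C₀ : Fin m → Fin m → ℝ), (0 : Fin m → ℝ)), H (inv y) = y := by
    rw [← hH0]; exact hstrict.eventually_right_inverse
  set g : (Fin m → Fin m → ℝ) → (Fin m → ℝ) := fun C => (inv (C, 0)).2 with hgdef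
  have hgC₀ : g C₀ = x₀ := by rw [hgdef]; simp [hinva]
  have hgcd : ContDiffAt ℝ 1 g C₀ := by
    have h1 : ContDiffAt ℝ 1 (fun C : Fin m → Fin m → ℝ => ((C, (0 : Fin m → ℝ)))) C₀ :=
      (contDiff_id.prodMk contDiff_const).contDiffAt
    have h2 : ContDiffAt ℝ 1 (fun C : Fin m → Fin m → ℝ => inv (C, 0)) C₀ :=
      hinvcd.comp C₀ h1
    have h3 : ContDiffAt ℝ 1
        (fun y : (Fin m → Fin m → ℝ) × (Fin m → ℝ) => y.2) (inv (C₀, 0)) :=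
      contDiff_snd.contDiffAt
    exact h3.comp C₀ h2
  obtain ⟨U₁, hU₁, hgU₁⟩ := hgcd.contDiffOn le_rfl (by simp)
  have hcont : Continuous (fun C : Fin m → Fin m → ℝ => ((C, (0 : Fin m → ℝ)))) :=
    continuous_id.prodMk continuous_const
  set U₂ : Set (Fin m → Fin m → ℝ) :=
    (fun C : Fin m → Fin m → ℝ => ((C, (0 : Fin m → ℝ)))) ⁻¹' {y | H (inv y) = y} with hU₂def
  have hU₂ : U₂ ∈ nhds C₀ := hcont.continuousAt.preimage_mem_nhds hev
  have hfixpt : ∀ C ∈ U₂, g C = f (-(lam⁻¹) • (b + (Matrix.of C).mulVec (g C))) := by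
    intro C hC
    have h1 : H (inv (C, 0)) = (C, 0) := hC
    have h2 : (inv (C, 0)).1 = C := congrArg Prod.fst h1
    have h3 : (inv (C, 0)).2 - f (u (inv (C, 0))) = 0 := congrArg Prod.snd h1
    have h4 : g C = f (u ((inv (C, 0)).1, g C)) := by
      rw [hgdef]; simpa [sub_eq_zero] using h3
    conv_lhs => rw [h4, h2]
    rfl
  refine ⟨U₁ ∩ U₂, Filter.inter_mem hU₁ hU₂, g, hgU₁.mono Set.inter_subset_left, hgC₀,
    fun C hC => hfixpt C hC.2, ?_⟩
  intro ψ hψ p q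
  -- derivative of inv
  have hinv' : HasStrictFDerivAt inv
      ((Teq.symm : ((Fin m → Fin m → ℝ) × (Fin m → ℝ)) ≃L[ℝ] ((Fin m → Fin m → ℝ) × (Fin m → ℝ))) :
        ((Fin m → Fin m → ℝ) × (Fin m → ℝ)) →L[ℝ] ((Fin m → Fin m → ℝ) × (Fin m → ℝ))) (C₀, 0) := by
    rw [← hH0]; exact hstrict.to_localInverse
  set Dg : (Fin m → Fin m → ℝ) →L[ℝ] (Fin m → ℝ) :=
    (ContinuousLinearMap.snd ℝ _ _).comp
      (((Teq.symm : ((Fin m → Fin m → ℝ) × (Fin m → ℝ)) ≃L[ℝ] ((Fin m → Fin m → ℝ) × (Fin m → ℝ))) :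
        ((Fin m → Fin m → ℝ) × (Fin m → ℝ)) →L[ℝ] ((Fin m → Fin m → ℝ) × (Fin m → ℝ))).comp
        (ContinuousLinearMap.inl ℝ (Fin m → Fin m → ℝ) (Fin m → ℝ))) with hDgdef
  have hg' : HasFDerivAt g Dg C₀ := by
    have h1 : HasFDerivAt (fun C : Fin m → Fin m → ℝ => ((C, (0 : Fin m → ℝ))))
        (ContinuousLinearMap.inl ℝ (Fin m → Fin m → ℝ) (Fin m → ℝ)) C₀ :=
      (hasFDerivAt_id C₀).prodMk (hasFDerivAt_const _ _)
    have h2 := (hinv'.hasFDerivAt.comp C₀ h1)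
    have h3 : HasFDerivAt (fun y : (Fin m → Fin m → ℝ) × (Fin m → ℝ) => y.2)
        (ContinuousLinearMap.snd ℝ (Fin m → Fin m → ℝ) (Fin m → ℝ)) (inv (C₀, 0)) :=
      hasFDerivAt_snd
    exact h3.comp C₀ h2
  have hψ' : HasFDerivAt ψ (fderiv ℝ ψ x₀) x₀ := (hψ.differentiable one_ne_zero x₀).hasFDerivAt
  have hcomp : HasFDerivAt (fun C => ψ (g C)) ((fderiv ℝ ψ x₀).comp Dg) C₀ := by
    refine HasFDerivAt.comp C₀ ?_ hg'
    rw [hgC₀]; exact hψ'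
  rw [hcomp.fderiv]
  set w : Fin m → ℝ := fun a => fderiv ℝ ψ x₀ (Pi.single a 1) with hwdef
  have hsingle : (Matrix.of (Pi.single p (Pi.single q 1))).mulVec x₀
      = x₀ q • (Pi.single p 1 : Fin m → ℝ) := by
    ext i
    by_cases hip : i = p <;>
      simp [Matrix.mulVec, dotProduct, Pi.single_apply, hip, ite_mul, Finset.sum_ite_eq']
  have hDgc : Dg (Pi.single p (Pi.single q 1)) =
      (-(lam⁻¹) * x₀ q) • ((M⁻¹ * J).mulVec (Pi.single p 1)) := by
    have h0 : Dg (Pi.single p (Pi.single q 1)) =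
        (M⁻¹).mulVec ((0 : Fin m → ℝ)
          - lam⁻¹ • J.mulVec ((Matrix.of (Pi.single p (Pi.single q 1))).mulVec x₀)) := rfl
    rw [h0, hsingle, zero_sub]
    have h1 : J.mulVec (x₀ q • (Pi.single p 1 : Fin m → ℝ)) = x₀ q • J.mulVec (Pi.single p 1) :=
      Matrix.mulVec_smul _ _ _
    rw [h1, Matrix.mulVec_neg, Matrix.mulVec_smul, Matrix.mulVec_smul,
      Matrix.mulVec_mulVec, smul_smul]
    module
  have hlin : ∀ z : Fin m → ℝ, fderiv ℝ ψ x₀ z = ∑ a, z a * w a := by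
    intro z
    have hz : z = ∑ a, z a • (Pi.single a 1 : Fin m → ℝ) := by
      funext i
      simp [Pi.single_apply, Finset.sum_ite_eq']
    conv_lhs => rw [hz, map_sum]
    refine Finset.sum_congr rfl fun a _ => ?_
    rw [_root_.map_smul, smul_eq_mul, hwdef]
  rw [ContinuousLinearMap.comp_apply, hDgc, _root_.map_smul, hlin]
  rw [Matrix.mulVec_single_one]
  have htr : Jᵀ * (M⁻¹)ᵀ = (M⁻¹ * J)ᵀ := (Matrix.transpose_mul _ _).symm
  rw [htr]
  have hrhs : ((M⁻¹ * J)ᵀ.mulVec w) p = ∑ a, (M⁻¹ * J)ᵀ p a * w a := rfl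
  simp only [Matrix.smul_apply, Matrix.vecMulVec_apply, hrhs, smul_eq_mul,
    Matrix.transpose_apply, Matrix.col_apply]
  ring
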